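/- Let k be an odd positive integer. If f_N → f for some f ∈ (0,1) as N → ∞, then lim_{N→∞} N^{(k+1)/2} · Corr_N(k) = (f(f−1))^{(k−1)/2} · (2f−1) · ((k−1)/3) · (k+1)!/(2^{(k+1)/2} ((k+1)/2)!), i.e. the limit equals (f(f−1))^{(k−1)/2} (2f−1) (1/3)(k−1) E Z^{k+1}. -/

import Mathlib

open Filter Finset

noncomputable def Ssum (N m k : ℕ) (p : ℝ) : ℝ :=
  ∑ r ∈ (Finset.range N).powersetCard m,
    ∏ A ∈ Finset.range k, ((if A ∈ r then (1 : ℝ) else 0) - p)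

noncomputable def Tsum (N m : ℕ) (s : Finset ℕ) (p : ℝ) : ℝ :=
  ∑ r ∈ (Finset.range N).powersetCard m,
    ∏ A ∈ s, ((if A ∈ r then (1 : ℝ) else 0) - p)


lemma Tsum_swap (N m : ℕ) (i j : ℕ) (hi : i < N) (hj : j < N) (s : Finset ℕ) (p : ℝ) :
    Tsum N m s p = Tsum N m (s.image (Equiv.swap i j)) p := by
  unfold Tsum
  apply Finset.sum_nbij' (fun r => r.image (Equiv.swap i j)) (fun r => r.image (Equiv.swap i j))
  · intro r hr
    simp only [Finset.mem_powersetCard] at hr ⊢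
    constructor
    · intro x hx
      rcases Finset.mem_image.mp hx with ⟨a, ha, rfl⟩
      have := hr.1 ha
      simp only [Finset.mem_range] at this ⊢
      rcases Equiv.swap_apply_def i j a with _
      rw [Equiv.swap_apply_def]
      split <;> [exact hj; skip]
      split <;> [exact hi; exact this]
    · rw [Finset.card_image_of_injective _ (Equiv.injective _), hr.2]
  · intro r hr
    simp only [Finset.mem_powersetCard] at hr ⊢
    constructor
    · intro x hx
      rcases Finset.mem_image.mp hx with ⟨a, ha, rfl⟩
      have := hr.1 ha
      simp only [Finset.mem_range] at this ⊢
      rw [Equiv.swap_apply_def]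
      split <;> [exact hj; skip]
      split <;> [exact hi; exact this]
    · rw [Finset.card_image_of_injective _ (Equiv.injective _), hr.2]
  · intro r _
    rw [Finset.image_image]
    have : (Equiv.swap i j) ∘ (Equiv.swap i j) = id := by
      ext x; simp
    rw [this, Finset.image_id]
  · intro r _
    rw [Finset.image_image]
    have : (Equiv.swap i j) ∘ (Equiv.swap i j) = id := by
      ext x; simp
    rw [this, Finset.image_id]
  · intro r hr
    rw [Finset.prod_image (fun a _ b _ h => Equiv.injective _ h)]
    apply Finset.prod_congr rfl
    intro A _
    congr 1
    have : Equiv.swap i j A ∈ r.image (Equiv.swap i j) ↔ A ∈ r := by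
      constructor
      · intro h
        rcases Finset.mem_image.mp h with ⟨a, ha, h2⟩
        have := Equiv.injective (Equiv.swap i j) h2
        rwa [← this]
      · intro h; exact Finset.mem_image_of_mem _ h
    simp only [this]

lemma img1 (A k : ℕ) (hA : A < k) :
    ((Finset.range k).erase A).image (Equiv.swap A (k-1)) = Finset.range (k-1) := by
  ext x
  simp only [Finset.mem_image, Finset.mem_erase, Finset.mem_range, Equiv.swap_apply_def]
  constructor
  · rintro ⟨a, ⟨hne, hlt⟩, rfl⟩
    split_ifs <;> omega
  · intro hx
    by_cases h : x = A
    · refine ⟨k - 1, ⟨by omega, by omega⟩, ?_⟩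
      rw [if_neg (by omega), if_pos rfl]; omega
    · exact ⟨x, ⟨h, by omega⟩, by rw [if_neg h, if_neg (by omega)]⟩

lemma img2 (A k : ℕ) (hA : k ≤ A) :
    (insert A (Finset.range k)).image (Equiv.swap A k) = Finset.range (k+1) := by
  ext x
  simp only [Finset.mem_image, Finset.mem_insert, Finset.mem_range, Equiv.swap_apply_def]
  constructor
  · rintro ⟨a, ha, rfl⟩
    split_ifs <;> omega
  · intro hx
    by_cases h : x = k
    · exact ⟨A, Or.inl rfl, by simp [h]⟩
    · exact ⟨x, Or.inr (by omega), by rw [if_neg (by omega), if_neg h]⟩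

lemma S_rec (N m k : ℕ) (hk : k < N) :
    ((N : ℝ) - k) * Ssum N m (k+1) ((m : ℝ)/N)
      = -(k : ℝ) * ((1 - 2*((m:ℝ)/N)) * Ssum N m k ((m:ℝ)/N)
          + ((m:ℝ)/N)*(1-(m:ℝ)/N) * Ssum N m (k-1) ((m:ℝ)/N)) := by
  set p : ℝ := (m:ℝ)/N with hp
  have hN0 : (0:ℝ) < N := by
    have : 0 < N := by omega
    exact_mod_cast this
  -- the centered indicators sum to zero over the whole population
  have hzero : ∀ r ∈ (Finset.range N).powersetCard m,
      ∑ A ∈ Finset.range N, ((if A ∈ r then (1:ℝ) else 0) - p) = 0 := by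
    intro r hr
    rw [Finset.mem_powersetCard] at hr
    rw [Finset.sum_sub_distrib, Finset.sum_const, Finset.sum_ite_mem,
      Finset.inter_eq_right.mpr hr.1, Finset.sum_const, hr.2]
    simp only [nsmul_eq_mul, mul_one, hp]
    field_simp
    simp [Finset.card_range]
  -- main double sum
  have key : (0:ℝ) = ∑ A ∈ Finset.range N, ∑ r ∈ (Finset.range N).powersetCard m,
      (∏ B ∈ Finset.range k, ((if B ∈ r then (1:ℝ) else 0) - p))
        * ((if A ∈ r then (1:ℝ) else 0) - p) := by
    rw [Finset.sum_comm]
    symm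
    apply Finset.sum_eq_zero
    intro r hr
    rw [← Finset.mul_sum, hzero r hr, mul_zero]
  -- split the outer sum
  have hsplit : ∀ g : ℕ → ℝ, ∑ A ∈ Finset.range N, g A
      = ∑ A ∈ Finset.range k, g A + ∑ A ∈ Finset.Ico k N, g A := by
    intro g
    rw [Finset.range_eq_Ico, ← Finset.sum_Ico_consecutive g (Nat.zero_le k) hk.le,
      ← Finset.range_eq_Ico]
  rw [hsplit] at key
  -- the Ico part
  have hIco : ∀ A ∈ Finset.Ico k N, (∑ r ∈ (Finset.range N).powersetCard m,
      (∏ B ∈ Finset.range k, ((if B ∈ r then (1:ℝ) else 0) - p))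
        * ((if A ∈ r then (1:ℝ) else 0) - p)) = Ssum N m (k+1) p := by
    intro A hA
    rw [Finset.mem_Ico] at hA
    have h1 : ∀ r : Finset ℕ,
        (∏ B ∈ Finset.range k, ((if B ∈ r then (1:ℝ) else 0) - p))
          * ((if A ∈ r then (1:ℝ) else 0) - p)
        = ∏ B ∈ insert A (Finset.range k), ((if B ∈ r then (1:ℝ) else 0) - p) := by
      intro r
      rw [Finset.prod_insert (by simp [Finset.mem_range]; omega), mul_comm]
    simp only [h1]
    have := Tsum_swap N m A k (by omega) hk (insert A (Finset.range k)) p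
    rw [img2 A k hA.1] at this
    exact this
  rw [Finset.sum_congr rfl hIco, Finset.sum_const, Nat.card_Ico, nsmul_eq_mul,
    Nat.cast_sub hk.le] at key
  -- the range k part
  have hklt : ∀ A, A < k → (∑ r ∈ (Finset.range N).powersetCard m,
      (∏ B ∈ Finset.range k, ((if B ∈ r then (1:ℝ) else 0) - p))
        * ((if A ∈ r then (1:ℝ) else 0) - p))
      = (1 - 2*p) * Ssum N m k p + p*(1-p) * Ssum N m (k-1) p := by
    intro A hA
    have h1 : ∀ r : Finset ℕ,
        (∏ B ∈ Finset.range k, ((if B ∈ r then (1:ℝ) else 0) - p))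
          * ((if A ∈ r then (1:ℝ) else 0) - p)
        = (1 - 2*p) * ∏ B ∈ Finset.range k, ((if B ∈ r then (1:ℝ) else 0) - p)
          + p*(1-p) * ∏ B ∈ (Finset.range k).erase A, ((if B ∈ r then (1:ℝ) else 0) - p) := by
      intro r
      have hmem : A ∈ Finset.range k := Finset.mem_range.mpr hA
      rw [← Finset.mul_prod_erase _ _ hmem]
      have hsq : ((if A ∈ r then (1:ℝ) else 0) - p) * ((if A ∈ r then (1:ℝ) else 0) - p)
          = (1 - 2*p) * ((if A ∈ r then (1:ℝ) else 0) - p) + p*(1-p) := by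
        by_cases h : A ∈ r <;> simp [h] <;> ring
      set F := fun B => ((if B ∈ r then (1:ℝ) else 0) - p)
      set P := ∏ B ∈ (Finset.range k).erase A, F B
      calc (F A * P) * F A = (F A * F A) * P := by ring
        _ = ((1-2*p) * F A + p*(1-p)) * P := by rw [hsq]
        _ = (1-2*p) * (F A * P) + p*(1-p) * P := by ring
    simp only [h1]
    rw [Finset.sum_add_distrib, ← Finset.mul_sum, ← Finset.mul_sum]
    have h2 : (∑ r ∈ (Finset.range N).powersetCard m,
        ∏ B ∈ (Finset.range k).erase A, ((if B ∈ r then (1:ℝ) else 0) - p))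
        = Ssum N m (k-1) p := by
      have := Tsum_swap N m A (k-1) (by omega) (by omega) ((Finset.range k).erase A) p
      rw [img1 A k hA] at this
      exact this
    rw [h2]
    rfl
  rw [Finset.sum_congr rfl (fun A hA => hklt A (Finset.mem_range.mp hA)),
    Finset.sum_const, nsmul_eq_mul, Finset.card_range] at key
  linarith [key]

noncomputable def Corr (N m k : ℕ) : ℝ :=
  (Nat.choose N m : ℝ)⁻¹ * Ssum N m k ((m:ℝ)/N)

lemma Corr_zero (N m : ℕ) (hm : m ≤ N) : Corr N m 0 = 1 := by
  unfold Corr Ssum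
  simp only [Finset.range_zero, Finset.prod_empty, Finset.sum_const, nsmul_eq_mul, mul_one,
    Finset.card_powersetCard, Finset.card_range]
  rw [inv_mul_cancel₀]
  exact_mod_cast (Nat.choose_pos hm).ne'

lemma Corr_rec (N m k : ℕ) (hk : k < N) :
    ((N:ℝ) - k) * Corr N m (k+1)
      = -(k:ℝ) * ((1-2*((m:ℝ)/N)) * Corr N m k + ((m:ℝ)/N)*(1-(m:ℝ)/N)*Corr N m (k-1)) := by
  have h := S_rec N m k hk
  unfold Corr
  linear_combination (Nat.choose N m : ℝ)⁻¹ * h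

lemma tendsto_ratio (k : ℕ) :
    Tendsto (fun N : ℕ => (N:ℝ)/((N:ℝ)-k)) atTop (nhds 1) := by
  have htop : Tendsto (fun N : ℕ => (N:ℝ) - k) atTop atTop := by
    apply tendsto_atTop_add_const_right atTop (-(k:ℝ))
    exact tendsto_natCast_atTop_atTop
  have h0 : Tendsto (fun N : ℕ => (k:ℝ)/((N:ℝ)-k)) atTop (nhds 0) :=
    Tendsto.div_atTop tendsto_const_nhds htop
  have h1 : Tendsto (fun N : ℕ => 1 + (k:ℝ)/((N:ℝ)-k)) atTop (nhds 1) := by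
    have := h0.const_add 1
    simpa using this
  apply h1.congr'
  filter_upwards [eventually_ge_atTop (k+1)] with N hN
  have hne : (N:ℝ) - k ≠ 0 := by
    have : (k:ℝ) + 1 ≤ N := by exact_mod_cast hN
    linarith
  field_simp
  ring

lemma tendsto_step (n : ℕ → ℕ) (f : ℝ)
    (hconv : Tendsto (fun N : ℕ => (n N : ℝ) / N) atTop (nhds f))
    (k e : ℕ) (L M : ℝ)
    (hL : Tendsto (fun N : ℕ => (N:ℝ)^e * Corr N (n N) k) atTop (nhds L))
    (hM : Tendsto (fun N : ℕ => (N:ℝ)^e * Corr N (n N) (k-1)) atTop (nhds M)) :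
    Tendsto (fun N : ℕ => (N:ℝ)^(e+1) * Corr N (n N) (k+1)) atTop
      (nhds (-(k:ℝ) * ((1-2*f)*L + f*(1-f)*M))) := by
  have hg : Tendsto (fun N : ℕ => ((N:ℝ)/((N:ℝ)-k)) * (-(k:ℝ)) *
      ((1 - 2*((n N:ℝ)/N)) * ((N:ℝ)^e * Corr N (n N) k)
        + ((n N:ℝ)/N)*(1-((n N:ℝ)/N)) * ((N:ℝ)^e * Corr N (n N) (k-1))))
      atTop (nhds (1 * (-(k:ℝ)) * ((1-2*f)*L + f*(1-f)*M))) := by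
    apply Tendsto.mul
    · exact (tendsto_ratio k).mul_const _
    · exact (((hconv.const_mul 2).const_sub 1).mul hL).add
        ((hconv.mul (hconv.const_sub 1)).mul hM)
  rw [one_mul] at hg
  apply hg.congr'
  filter_upwards [eventually_ge_atTop (k+1)] with N hN
  have hkN : k < N := hN
  have hne : (N:ℝ) - k ≠ 0 := by
    have : (k:ℝ) + 1 ≤ N := by exact_mod_cast hN
    linarith
  have hrec := Corr_rec N (n N) k hkN
  have expand : (N:ℝ)/((N:ℝ)-k) * ((N:ℝ)-k) = N := div_mul_cancel₀ _ hne
  calc ((N:ℝ)/((N:ℝ)-k)) * (-(k:ℝ)) *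
      ((1 - 2*((n N:ℝ)/N)) * ((N:ℝ)^e * Corr N (n N) k)
        + ((n N:ℝ)/N)*(1-((n N:ℝ)/N)) * ((N:ℝ)^e * Corr N (n N) (k-1)))
      = ((N:ℝ)/((N:ℝ)-k) * ((N:ℝ)-k)) * ((N:ℝ)^e * Corr N (n N) (k+1)) := by
        linear_combination (-(N:ℝ)/((N:ℝ)-k) * (N:ℝ)^e) * hrec
    _ = (N:ℝ)^(e+1) * Corr N (n N) (k+1) := by rw [expand]; ring

noncomputable def cc (f : ℝ) (m : ℕ) : ℝ :=
  (f*(f-1))^m * ((Nat.factorial (2*m) : ℝ) / (2^m * (Nat.factorial m : ℝ)))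

noncomputable def dd (f : ℝ) (m : ℕ) : ℝ :=
  (f*(f-1))^m * (2*f-1) * ((2*(m:ℝ))/3)
    * ((Nat.factorial (2*m+2) : ℝ) / (2^(m+1) * (Nat.factorial (m+1) : ℝ)))

lemma fact2 (m : ℕ) : ((2*m+2).factorial : ℝ)
    = (2*(m:ℝ)+2)*(2*(m:ℝ)+1)*((2*m).factorial : ℝ) := by
  have h : (2*m+2).factorial = (2*m+2)*((2*m+1)*(2*m).factorial) := by
    rw [show 2*m+2 = (2*m+1)+1 by ring, Nat.factorial_succ, Nat.factorial_succ]
  rw [h]; push_cast; ring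

lemma cc_succ (f : ℝ) (m : ℕ) :
    cc f (m+1) = -((2*m+1 : ℕ):ℝ) * ((1-2*f)*0 + f*(1-f)*cc f m) := by
  unfold cc
  have h1 := fact2 m
  have h2 : ((m+1).factorial : ℝ) = ((m:ℝ)+1) * (m.factorial : ℝ) := by
    rw [Nat.factorial_succ]; push_cast; ring
  rw [show 2*(m+1) = 2*m+2 by ring, h1, h2]
  have hm : (m.factorial : ℝ) ≠ 0 := by exact_mod_cast m.factorial_ne_zero
  have h2m : (2:ℝ)^m ≠ 0 := by positivity
  have hm1 : (m:ℝ)+1 ≠ 0 := by positivity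
  push_cast
  field_simp
  ring

lemma dd_succ (f : ℝ) (m : ℕ) :
    dd f (m+1) = -((2*m+2 : ℕ):ℝ) * ((1-2*f)*cc f (m+1) + f*(1-f)*dd f m) := by
  unfold cc dd
  have h1 : ((2*(m+1)+2).factorial : ℝ)
      = (2*(m:ℝ)+4)*(2*(m:ℝ)+3)*((2*m+2).factorial : ℝ) := by
    have h : (2*(m+1)+2).factorial = (2*(m+1)+2)*((2*(m+1)+1)*(2*(m+1)).factorial) := by
      rw [show 2*(m+1)+2 = (2*(m+1)+1)+1 by ring, Nat.factorial_succ, Nat.factorial_succ]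
    rw [h, show 2*(m+1) = 2*m+2 by ring]; push_cast; ring
  have h1' : ((2*(m+1)).factorial : ℝ) = ((2*m+2).factorial : ℝ) := by norm_num [show 2*(m+1) = 2*m+2 by ring]
  have h2 : ((m+1+1).factorial : ℝ) = ((m:ℝ)+2) * ((m+1).factorial : ℝ) := by
    rw [Nat.factorial_succ]; push_cast; ring
  rw [h1, h2, h1']
  have hm : ((m+1).factorial : ℝ) ≠ 0 := by exact_mod_cast (m+1).factorial_ne_zero
  have h2m : (2:ℝ)^(m+1) ≠ 0 := by positivity
  have hm1 : (m:ℝ)+2 ≠ 0 := by positivity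
  push_cast
  field_simp
  ring

lemma main_ind (n : ℕ → ℕ) (hn : ∀ N, n N ≤ N) (f : ℝ)
    (hconv : Tendsto (fun N : ℕ => (n N : ℝ) / N) atTop (nhds f)) :
    ∀ m : ℕ,
      Tendsto (fun N : ℕ => (N:ℝ)^m * Corr N (n N) (2*m)) atTop (nhds (cc f m)) ∧
      Tendsto (fun N : ℕ => (N:ℝ)^(m+1) * Corr N (n N) (2*m+1)) atTop (nhds (dd f m)) := by
  intro m
  induction m with
  | zero =>
    constructor
    · have : (fun N : ℕ => (N:ℝ)^0 * Corr N (n N) 0) = fun _ => 1 := by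
        funext N; rw [pow_zero, one_mul, Corr_zero N (n N) (hn N)]
      rw [this, show cc f 0 = 1 by unfold cc; simp]
      exact tendsto_const_nhds
    · have hdd : dd f 0 = 0 := by unfold dd; simp
      rw [hdd]
      apply Tendsto.congr' (f₁ := fun _ : ℕ => (0:ℝ))
      · filter_upwards [eventually_ge_atTop 1] with N hN
        have hrec := Corr_rec N (n N) 0 (by omega)
        simp only [Nat.cast_zero, neg_zero, zero_mul, sub_zero] at hrec
        rw [pow_one]
        linarith
      · exact tendsto_const_nhds
  | succ m ih =>
    have hInv : Tendsto (fun N : ℕ => ((N:ℝ))⁻¹) atTop (nhds 0) :=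
      tendsto_inv_atTop_zero.comp tendsto_natCast_atTop_atTop
    -- N^m * Corr (2m+1) → 0
    have hL0 : Tendsto (fun N : ℕ => (N:ℝ)^m * Corr N (n N) (2*m+1)) atTop (nhds 0) := by
      have := ih.2.mul hInv
      rw [mul_zero] at this
      apply this.congr'
      filter_upwards [eventually_ge_atTop 1] with N hN
      have hN0 : (N:ℝ) ≠ 0 := by
        have : 0 < N := hN
        positivity
      field_simp
      ring
    have hA : Tendsto (fun N : ℕ => (N:ℝ)^(m+1) * Corr N (n N) (2*(m+1))) atTop
        (nhds (cc f (m+1))) := by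
      have step := tendsto_step n f hconv (2*m+1) m 0 (cc f m) hL0
        (by simpa using ih.1)
      rw [← cc_succ f m] at step
      have : 2*m+1+1 = 2*(m+1) := by ring
      rw [this] at step
      exact step
    refine ⟨hA, ?_⟩
    have step := tendsto_step n f hconv (2*m+2) (m+1) (cc f (m+1)) (dd f m)
      (by rw [show 2*(m+1) = 2*m+2 by ring] at hA; exact hA)
      (by simpa using ih.2)
    rw [← dd_succ f m] at step
    rw [show 2*(m+1)+1 = 2*m+2+1 by ring]
    exact step

/-- Let `k` be an odd positive integer.  If the sampling fractions
`f_N = n_N/N` converge to some `f ∈ (0,1)` as `N → ∞`, then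
`lim_{N→∞} N^{(k+1)/2} · Corr_N(k)
  = (f(f−1))^{(k−1)/2} · (2f−1) · ((k−1)/3) · (k+1)!/(2^{(k+1)/2} ((k+1)/2)!)`,
i.e. the limit equals `(f(f−1))^{(k−1)/2} (2f−1) (1/3)(k−1) E Z^{k+1}` for a standard
normal `Z`.  Here
`Corr_N(k) = C(N,n_N)⁻¹ · Σ_{r ⊆ {1,…,N}, |r|=n_N} ∏_{A=1}^{k} (1_{A∈r} − f_N)`,
with the population `{1,…,N}` modelled as `Finset.range N` and the first `k`
individuals as `Finset.range k`. -/
theorem corr_limit_odd (n : ℕ → ℕ) (hn : ∀ N, n N ≤ N) (f : ℝ)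
    (hf : f ∈ Set.Ioo (0 : ℝ) 1)
    (hconv : Tendsto (fun N : ℕ => (n N : ℝ) / N) atTop (nhds f))
    (k : ℕ) (hk : Odd k) (hk0 : 0 < k) :
    Tendsto
      (fun N : ℕ => (N : ℝ) ^ ((k + 1) / 2) *
        ((Nat.choose N (n N) : ℝ)⁻¹ *
          ∑ r ∈ (Finset.range N).powersetCard (n N),
            ∏ A ∈ Finset.range k, ((if A ∈ r then (1 : ℝ) else 0) - (n N : ℝ) / N)))
      atTop
      (nhds ((f * (f - 1)) ^ ((k - 1) / 2) * (2 * f - 1) * (((k : ℝ) - 1) / 3) *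
        ((Nat.factorial (k + 1) : ℝ) /
          (2 ^ ((k + 1) / 2) * (Nat.factorial ((k + 1) / 2) : ℝ))))) := by
  obtain ⟨m, hm⟩ : ∃ m, k = 2*m+1 := by
    rcases hk with ⟨m, h⟩; exact ⟨m, by omega⟩
  subst hm
  have key := (main_ind n hn f hconv m).2
  have he : (2*m+1+1)/2 = m+1 := by omega
  have he2 : (2*m+1-1)/2 = m := by omega
  rw [he, he2]
  have hval : (f * (f - 1)) ^ m * (2 * f - 1) * ((((2*m+1 : ℕ) : ℝ) - 1) / 3) *
      ((Nat.factorial (2*m+1 + 1) : ℝ) / (2 ^ (m+1) * (Nat.factorial (m+1) : ℝ)))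
      = dd f m := by
    unfold dd
    push_cast
    ring
  rw [hval]
  exact key
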